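/- Suppose j, n, m ≥ 3 and n + m - 4 = (j-1)s where j, s, n are all odd. Then m_j(S_n, S_m) = ⌈(n+m-4)/(j-1)⌉ = s. -/

import Mathlib

/-- The complete balanced multipartite graph `K_{j×s}` on `Fin j × Fin s`:
vertices are adjacent iff they lie in different parts (different first coordinate). -/
def multiK (j s : ℕ) : SimpleGraph (Fin j × Fin s) where
  Adj u v := u.1 ≠ v.1
  symm := ⟨fun _ _ h => h.symm⟩
  loopless := ⟨fun _ h => h rfl⟩

/-- Degree of a vertex, via `Set.ncard` of its neighbor set. -/
noncomputable def mdeg {V : Type*} (G : SimpleGraph V) (v : V) : ℕ :=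
  (G.neighborSet v).ncard

/-- `K_{j×s} → (S_n, S_m)`: every red/blue edge coloring (red subgraph `R ≤ K_{j×s}`,
blue the rest) contains a red `K_{1,n-1}` or a blue `K_{1,m-1}`. -/
def Arrows (j s n m : ℕ) : Prop :=
  ∀ R : SimpleGraph (Fin j × Fin s), R ≤ multiK j s →
    (∃ v, n - 1 ≤ mdeg R v) ∨ (∃ v, m - 1 ≤ mdeg (multiK j s \ R) v)

/-- The size Ramsey multipartite number `m_j(S_n, S_m)`. -/
noncomputable def mj (j n m : ℕ) : ℕ := sInf {s | Arrows j s n m}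

lemma mdeg_eq_degree {V : Type*} [Fintype V] (G : SimpleGraph V) [DecidableRel G.Adj] (v : V) :
    mdeg G v = G.degree v := by
  classical
  rw [mdeg, SimpleGraph.degree, SimpleGraph.neighborFinset_def, ← Set.ncard_coe_finset,
    Set.coe_toFinset]

lemma mdeg_add {V : Type*} [Finite V] (R K : SimpleGraph V) (h : R ≤ K) (v : V) :
    mdeg R v + mdeg (K \ R) v = mdeg K v := by
  have hsub : R.neighborSet v ⊆ K.neighborSet v := fun u hu => h hu
  have hset : (K \ R).neighborSet v = K.neighborSet v \ R.neighborSet v := by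
    ext u
    simp only [SimpleGraph.mem_neighborSet, SimpleGraph.sdiff_adj, Set.mem_diff]
  rw [mdeg, mdeg, mdeg, hset, add_comm]
  exact Set.ncard_diff_add_ncard_of_subset hsub (Set.toFinite _)

lemma mdeg_multiK {j t : ℕ} (v : Fin j × Fin t) : mdeg (multiK j t) v = (j - 1) * t := by
  classical
  have hset : (multiK j t).neighborSet v =
      ↑((({v.1} : Finset (Fin j))ᶜ ×ˢ (Finset.univ : Finset (Fin t)))) := by
    ext u
    simp only [SimpleGraph.mem_neighborSet, Finset.coe_product, Set.mem_prod, Finset.coe_compl,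
      Finset.coe_singleton, Set.mem_compl_iff, Set.mem_singleton_iff, Finset.coe_univ,
      Set.mem_univ, and_true]
    exact ⟨fun h => fun e => (h : v.1 ≠ u.1) e.symm, fun h => (fun e => h e.symm : v.1 ≠ u.1)⟩
  rw [mdeg, hset, Set.ncard_coe_finset, Finset.card_product, Finset.card_compl,
    Finset.card_singleton, Finset.card_univ, Fintype.card_fin, Fintype.card_fin]

lemma arrows_upper (j n m s : ℕ) (hj : 3 ≤ j) (hn : 3 ≤ n) (hm : 3 ≤ m)
    (heq : n + m - 4 = (j - 1) * s) (hjo : Odd j) (hso : Odd s) (hno : Odd n) :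
    Arrows j s n m := by
  classical
  intro R hR
  by_contra hc
  push_neg at hc
  obtain ⟨h1, h2⟩ := hc
  have hdeg : ∀ v, mdeg R v = n - 2 := by
    intro v
    have e1 := mdeg_add R (multiK j s) hR v
    rw [mdeg_multiK, ← heq] at e1
    have := h1 v
    have := h2 v
    omega
  haveI : DecidableRel R.Adj := Classical.decRel _
  have hev : Even (∑ v : Fin j × Fin s, R.degree v) := by
    rw [R.sum_degrees_eq_twice_card_edges]; exact even_two_mul _
  have hsum : (∑ v : Fin j × Fin s, R.degree v) = (j * s) * (n - 2) := by
    calc (∑ v : Fin j × Fin s, R.degree v) = ∑ _v : Fin j × Fin s, (n - 2) :=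
          Finset.sum_congr rfl (fun v _ => by rw [← mdeg_eq_degree, hdeg])
      _ = (j * s) * (n - 2) := by
          rw [Finset.sum_const, smul_eq_mul, Finset.card_univ, Fintype.card_prod,
            Fintype.card_fin, Fintype.card_fin]
  rw [hsum] at hev
  have hodd : Odd ((j * s) * (n - 2)) :=
    (hjo.mul hso).mul (Nat.Odd.sub_even (by omega) hno (by decide))
  exact (Nat.not_even_iff_odd.mpr hodd) hev

private lemma half_le {a b : ℕ} (h : a + a ≤ b + b) : a ≤ b := by omega

lemma not_arrows (j n m s : ℕ) (hj : 3 ≤ j) (hn : 3 ≤ n) (hm : 3 ≤ m)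
    (heq : n + m - 4 = (j - 1) * s) (hjo : Odd j) (hno : Odd n)
    (t : ℕ) (ht : t < s) : ¬ Arrows j t n m := by
  classical
  rcases Nat.eq_zero_or_pos t with rfl | htpos
  · intro hA
    rcases hA ⊥ bot_le with ⟨v, _⟩ | ⟨v, _⟩ <;> exact v.2.elim0
  haveI : NeZero j := ⟨by omega⟩
  haveI : NeZero t := ⟨by omega⟩
  obtain ⟨k, hk⟩ : ∃ k, j - 1 = k + k := Nat.Odd.sub_odd hjo odd_one
  set d : ℕ := min ((j - 1) * t) (n - 3) with hd
  have hdeven : Even d := by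
    rcases Nat.le_total ((j - 1) * t) (n - 3) with h | h
    · rw [hd, min_eq_left h, hk]
      exact ⟨k * t, by ring⟩
    · rw [hd, min_eq_right h]
      exact Nat.Odd.sub_odd hno (by decide)
  obtain ⟨e, he⟩ : ∃ e, d = e + e := hdeven
  -- the "positive half" H of elements with first coordinate in [1, k]
  have hkj : ∀ a : Fin k, a.val + 1 < j := fun a => by have := a.isLt; omega
  set f : Fin k × Fin t → Fin j × Fin t := fun p => (⟨p.1.val + 1, hkj p.1⟩, p.2) with hf
  have hfinj : Function.Injective f := by
    rintro ⟨a, b⟩ ⟨c, d'⟩ hfe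
    simp only [hf, Prod.mk.injEq, Fin.mk.injEq] at hfe
    refine Prod.ext (Fin.ext ?_) hfe.2
    show a.val = c.val
    omega
  set H : Finset (Fin j × Fin t) := Finset.image f Finset.univ with hH
  have hHcard : H.card = k * t := by
    rw [hH, Finset.card_image_of_injective _ hfinj, Finset.card_univ, Fintype.card_prod,
      Fintype.card_fin, Fintype.card_fin]
  have hHmem : ∀ p ∈ H, 1 ≤ p.1.val ∧ p.1.val ≤ k := by
    intro p hp
    rw [hH, Finset.mem_image] at hp
    obtain ⟨q, _, rfl⟩ := hp
    have := q.1.isLt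
    constructor <;> simp [hf] <;> omega
  have heH : e ≤ H.card := by
    rw [hHcard]
    apply half_le
    rw [← he]
    calc d ≤ (j - 1) * t := min_le_left _ _
      _ = k * t + k * t := by rw [hk]; ring
  obtain ⟨H', hH'sub, hH'card⟩ := Finset.exists_subset_card_eq heH
  set S : Finset (Fin j × Fin t) := H' ∪ H'.image (fun x => -x) with hS
  -- membership facts
  have hval : ∀ p ∈ H', 1 ≤ p.1.val ∧ p.1.val ≤ k := fun p hp => hHmem p (hH'sub hp)
  have hnegval : ∀ p ∈ H', (-p).1.val = j - p.1.val := by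
    intro p hp
    have h1 := hval p hp
    show (-(p.1)).val = j - p.1.val
    rw [Fin.neg_def]
    exact Nat.mod_eq_of_lt (by have := p.1.isLt; omega)
  have hdisj : Disjoint H' (H'.image (fun x => -x)) := by
    rw [Finset.disjoint_left]
    intro x hx hx'
    rw [Finset.mem_image] at hx'
    obtain ⟨y, hy, rfl⟩ := hx'
    have h1 := hval _ hx
    have h2 := hval _ hy
    have h3 := hnegval _ hy
    rw [h3] at h1
    omega
  have hScard : S.card = d := by
    rw [hS, Finset.card_union_of_disjoint hdisj,
      Finset.card_image_of_injective _ neg_injective, hH'card, ← he]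
  have hSfst : ∀ x ∈ S, x.1 ≠ 0 := by
    intro x hx
    rw [hS, Finset.mem_union] at hx
    rcases hx with hx | hx
    · have h1 := hval _ hx
      intro h0
      rw [Fin.ext_iff, Fin.val_zero] at h0
      omega
    · rw [Finset.mem_image] at hx
      obtain ⟨y, hy, rfl⟩ := hx
      have h1 := hval _ hy
      show -(y.1) ≠ 0
      rw [Ne, neg_eq_zero, Fin.ext_iff, Fin.val_zero]
      omega
  have hS0 : (0 : Fin j × Fin t) ∉ S := fun h0 => hSfst _ h0 rfl
  have hSsymm : ∀ x ∈ S, -x ∈ S := by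
    intro x hx
    rw [hS, Finset.mem_union] at hx ⊢
    rcases hx with hx | hx
    · exact Or.inr (Finset.mem_image_of_mem _ hx)
    · rw [Finset.mem_image] at hx
      obtain ⟨y, hy, rfl⟩ := hx
      rw [neg_neg]
      exact Or.inl hy
  -- the red graph
  set R : SimpleGraph (Fin j × Fin t) :=
    { Adj := fun u v => v - u ∈ S
      symm := ⟨fun u v h => by have := hSsymm _ h; rwa [neg_sub] at this⟩
      loopless := ⟨fun u h => hS0 (by simpa using h)⟩ } with hR
  have hRK : R ≤ multiK j t := by
    intro u v hadj
    have h1 := hSfst _ hadj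
    intro hfeq
    exact h1 (by show v.1 - u.1 = 0; rw [← hfeq, sub_self])
  have hRdeg : ∀ v, mdeg R v = d := by
    intro v
    have hset : R.neighborSet v = (fun x => x + v) '' ↑S := by
      ext u
      simp only [SimpleGraph.mem_neighborSet, Set.mem_image, Finset.mem_coe]
      constructor
      · intro hu; exact ⟨u - v, hu, by rw [sub_add_cancel]⟩
      · rintro ⟨x, hx, rfl⟩; show x + v - v ∈ S; rwa [add_sub_cancel_right]
    rw [mdeg, hset, Set.ncard_image_of_injective _ (add_left_injective v),
      Set.ncard_coe_finset, hScard]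
  have hbdeg : ∀ v, mdeg R v + mdeg (multiK j t \ R) v = (j - 1) * t :=
    fun v => by rw [mdeg_add R (multiK j t) hRK v, mdeg_multiK]
  -- conclude
  intro hA
  have hPle : (j - 1) * t + (j - 1) ≤ n + m - 4 := by
    rw [heq]
    calc (j - 1) * t + (j - 1) = (j - 1) * (t + 1) := by ring
      _ ≤ (j - 1) * s := Nat.mul_le_mul_left _ ht
  have hdP : d ≤ (j - 1) * t := min_le_left _ _
  have hdn : d ≤ n - 3 := min_le_right _ _
  have hchoice : d = (j - 1) * t ∨ d = n - 3 := min_choice _ _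
  rcases hA R hRK with ⟨v, hv⟩ | ⟨v, hv⟩
  · rw [hRdeg v] at hv
    omega
  · have h1 := hbdeg v
    rw [hRdeg v] at h1
    generalize hgen : (j - 1) * t = P at h1 hPle hdP hchoice
    omega

theorem stmt13 (j n m s : ℕ) (hj : 3 ≤ j) (hn : 3 ≤ n) (hm : 3 ≤ m)
    (heq : n + m - 4 = (j - 1) * s) (hjo : Odd j) (hso : Odd s) (hno : Odd n) :
    mj j n m = s ∧ (n + m - 4) ⌈/⌉ (j - 1) = s := by
  have hA : Arrows j s n m := arrows_upper j n m s hj hn hm heq hjo hso hno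
  have hNA : ∀ t, t < s → ¬ Arrows j t n m :=
    fun t ht => not_arrows j n m s hj hn hm heq hjo hno t ht
  constructor
  · refine le_antisymm (Nat.sInf_le hA) (le_csInf ⟨s, hA⟩ ?_)
    intro t htA
    by_contra hlt
    push_neg at hlt
    exact hNA t hlt htA
  · rw [heq, Nat.ceilDiv_eq_add_pred_div]
    have h1 : (j - 1) * s + (j - 1) - 1 = (j - 2) + (j - 1) * s := by
      generalize (j - 1) * s = Q
      omega
    rw [h1, Nat.add_mul_div_left _ _ (show 0 < j - 1 by omega),
      Nat.div_eq_of_lt (by omega), zero_add]
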